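/- The profile x̄ with x̄_k = s_k + γ, where γ = (n+1)⁻¹(φ⁻¹(a − δ) − l_N − l_Q), is the unique Nash equilibrium of the per-slot game with unconstrained strategies: for every user k and every x ≠ x̄_k one has C_k(x̄_k, x̄₋ₖ) < C_k(x, x̄₋ₖ), and no other profile has this best-response property. -/

import Mathlib

open Finset

/-- Per-slot energy cost of user `k`: `C_k(x) = (φ L + δ)(x_k − s_k) − a x_k`,
where `L = Σ_{k'} (x_{k'} − s_{k'}) + l_N + l_Q`. -/
noncomputable def userCost (n : ℕ) (s : Fin n → ℝ) (lN lQ φ δ a : ℝ)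
    (k : Fin n) (x : Fin n → ℝ) : ℝ :=
  (φ * ((∑ k', (x k' - s k')) + lN + lQ) + δ) * (x k - s k) - a * x k

/-- The candidate Nash equilibrium profile `x̄_k = s_k + γ`,
`γ = (n+1)⁻¹ (φ⁻¹ (a − δ) − l_N − l_Q)`. -/
noncomputable def nashProfile (n : ℕ) (s : Fin n → ℝ) (lN lQ φ δ a : ℝ) :
    Fin n → ℝ :=
  fun k => s k + ((n : ℝ) + 1)⁻¹ * (φ⁻¹ * (a - δ) - lN - lQ)

lemma sum_update_sub {n : ℕ} (s y : Fin n → ℝ) (k : Fin n) (t : ℝ) :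
    (∑ k', (Function.update y k t k' - s k')) =
    (∑ k', (y k' - s k')) - (y k - s k) + (t - s k) := by
  have h1 : (∑ k', Function.update y k t k') = t + ∑ k' ∈ univ.erase k, y k' := by
    rw [Finset.sum_update_of_mem (Finset.mem_univ k)]
    simp [Finset.sdiff_singleton_eq_erase]
  have h2 : ∑ k' ∈ univ.erase k, y k' = (∑ k', y k') - y k :=
    Finset.sum_erase_eq_sub (Finset.mem_univ k)
  simp only [Finset.sum_sub_distrib]
  rw [h1, h2]; ring

lemma userCost_update (n : ℕ) (s : Fin n → ℝ) (lN lQ φ δ a : ℝ) (k : Fin n)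
    (y : Fin n → ℝ) (t : ℝ) :
    userCost n s lN lQ φ δ a k (Function.update y k t) =
      φ * (t - s k) ^ 2 +
      (φ * ((∑ k', (y k' - s k')) - (y k - s k) + lN + lQ) + δ - a) * (t - s k)
      - a * s k := by
  unfold userCost
  rw [sum_update_sub, Function.update_self]
  ring

/-- The profile `x̄_k = s_k + γ` is the unique Nash equilibrium of the
per-slot game with unconstrained strategies: every user's equilibrium strategy is a
strict best response (any unilateral deviation strictly increases their cost), and
no other profile has the best-response property. -/
theorem nashProfile_unique_nash_equilibrium (n : ℕ) (hn : 1 ≤ n) (s : Fin n → ℝ)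
    (lN lQ φ δ a : ℝ) (hφ : 0 < φ) (hδ : 0 < δ) :
    (∀ k : Fin n, ∀ t : ℝ, t ≠ nashProfile n s lN lQ φ δ a k →
        userCost n s lN lQ φ δ a k (nashProfile n s lN lQ φ δ a) <
        userCost n s lN lQ φ δ a k (Function.update (nashProfile n s lN lQ φ δ a) k t))
    ∧ ∀ y : Fin n → ℝ,
        (∀ k : Fin n, ∀ t : ℝ,
            userCost n s lN lQ φ δ a k y ≤
            userCost n s lN lQ φ δ a k (Function.update y k t)) →
        y = nashProfile n s lN lQ φ δ a := by
  set γ : ℝ := ((n : ℝ) + 1)⁻¹ * (φ⁻¹ * (a - δ) - lN - lQ) with hγ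
  have hn1 : ((n : ℝ) + 1) ≠ 0 := by positivity
  have hφ' : φ ≠ 0 := ne_of_gt hφ
  have hkey : φ * ((n : ℝ) + 1) * γ = a - δ - φ * (lN + lQ) := by
    rw [hγ]; field_simp; ring
  have hsum : (∑ k', (nashProfile n s lN lQ φ δ a k' - s k')) = (n : ℝ) * γ := by
    have hc : ∀ k' : Fin n, nashProfile n s lN lQ φ δ a k' - s k' = γ := by
      intro k'; simp [nashProfile, hγ]
    rw [Finset.sum_congr rfl fun k' _ => hc k']
    simp [Finset.card_univ, mul_comm]
  have hself : ∀ (y : Fin n → ℝ) (k : Fin n),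
      userCost n s lN lQ φ δ a k y =
      φ * (y k - s k) ^ 2 +
      (φ * ((∑ k', (y k' - s k')) - (y k - s k) + lN + lQ) + δ - a) * (y k - s k)
      - a * s k := by
    intro y k
    conv_lhs => rw [← Function.update_eq_self k y]
    rw [userCost_update]
  constructor
  · intro k t ht
    rw [hself, userCost_update, hsum]
    have hxk : nashProfile n s lN lQ φ δ a k = s k + γ := rfl
    rw [hxk]
    have hne : t - (s k + γ) ≠ 0 := sub_ne_zero.mpr (by rw [← hxk]; exact ht)
    have hpos : 0 < (t - (s k + γ)) ^ 2 :=
      lt_of_le_of_ne (sq_nonneg _) (Ne.symm (pow_ne_zero 2 hne))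
    have hb : φ * ((n : ℝ) * γ - (s k + γ - s k) + lN + lQ) + δ - a = -(2 * φ * γ) := by
      linear_combination hkey
    rw [hb]
    nlinarith [mul_pos hφ hpos]
  · intro y hy
    have key : ∀ k : Fin n,
        φ * (y k - s k) = a - δ - φ * (∑ k', (y k' - s k')) - φ * (lN + lQ) := by
      intro k
      set B : ℝ := (∑ k', (y k' - s k')) - (y k - s k) + lN + lQ with hB
      set w : ℝ := (a - δ - φ * B) / (2 * φ) with hw
      have h := hy k (s k + w)
      rw [hself, userCost_update] at h
      rw [← hB] at h
      have hws : s k + w - s k = w := by ring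
      rw [hws] at h
      have hφw : 2 * φ * w = a - δ - φ * B := by rw [hw]; field_simp
      have hfd : φ * (y k - s k) ^ 2 + (φ * B + δ - a) * (y k - s k)
          - (φ * w ^ 2 + (φ * B + δ - a) * w) = φ * ((y k - s k) - w) ^ 2 := by
        linear_combination ((y k - s k) - w) * hφw
      have hle : φ * ((y k - s k) - w) ^ 2 ≤ 0 := by linarith
      have hge : 0 ≤ φ * ((y k - s k) - w) ^ 2 :=
        mul_nonneg hφ.le (sq_nonneg _)
      have h0 : ((y k - s k) - w) ^ 2 = 0 := by
        rcases mul_eq_zero.mp (le_antisymm hle hge) with h' | h'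
        · exact absurd h' hφ'
        · exact h'
      have hvw : y k - s k = w :=
        sub_eq_zero.mp (pow_eq_zero_iff (two_ne_zero) |>.mp h0)
      have hφv : 2 * φ * (y k - s k) = a - δ - φ * B := by rw [hvw]; exact hφw
      rw [hB] at hφv
      linear_combination hφv
    have hconst : ∀ k : Fin n, y k - s k = γ := by
      intro k
      have hk := key k
      have hall : ∀ j : Fin n, y j - s j = y k - s k := by
        intro j
        have hj := key j
        have : φ * (y j - s j) = φ * (y k - s k) := by linarith
        exact mul_left_cancel₀ hφ' this
      have hT : (∑ k', (y k' - s k')) = (n : ℝ) * (y k - s k) := by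
        rw [Finset.sum_congr rfl fun j _ => hall j]
        simp [Finset.card_univ, mul_comm]; ring
      rw [hT] at hk
      have : φ * ((n : ℝ) + 1) * (y k - s k) = φ * ((n : ℝ) + 1) * γ := by
        rw [hkey]; linarith
      exact mul_left_cancel₀ (by positivity) this
    funext k
    have := hconst k
    simp only [nashProfile, ← hγ]
    linarith
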